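/- Let y_0 ∈ (0,1) and define h_0 = 1 + 2y_0²/(1-y_0²), and recursively y_{i+1} = (1 - 2/h_i) y_i and h_{i+1} = h_i + 4 y_{i+1}²/(1 - y_{i+1}²). Then there exists δ > 0 such that for all 0 < y_0 < δ and all i ≥ 0: h_i < 1 + 5(y_0² + y_1² + ... + y_i²) < 2. -/

import Mathlib

set_option maxHeartbeats 1000000 in
/-- uniform bound h_i < 1 + 5(y_0²+...+y_i²) < 2 for small y_0. -/
theorem stmt_1 :
    ∃ δ > (0:ℝ), ∀ y h : ℕ → ℝ,
      y 0 ∈ Set.Ioo (0:ℝ) 1 → y 0 < δ →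
      h 0 = 1 + 2 * (y 0)^2 / (1 - (y 0)^2) →
      (∀ i : ℕ, y (i+1) = (1 - 2 / h i) * y i) →
      (∀ i : ℕ, h (i+1) = h i + 4 * (y (i+1))^2 / (1 - (y (i+1))^2)) →
      ∀ i : ℕ,
        h i < 1 + 5 * ∑ j ∈ Finset.range (i+1), (y j)^2 ∧
        1 + 5 * ∑ j ∈ Finset.range (i+1), (y j)^2 < 2 := by
  refine ⟨1/10, by norm_num, ?_⟩
  intro y h hy0 hyδ hh0 hyrec hhrec
  obtain ⟨hc0, hc1⟩ := hy0
  set c := y 0 with hc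
  have hcδ : c < 1/10 := hyδ
  have hcsq : c^2 < 1/100 := by nlinarith
  set S : ℕ → ℝ := fun i => ∑ j ∈ Finset.range (i+1), (y j)^2 with hS
  have hSnn : ∀ i, 0 ≤ S i := fun i => Finset.sum_nonneg (fun j _ => sq_nonneg _)
  have hSlb : ∀ i, c^2 ≤ S i := by
    intro i
    have := Finset.single_le_sum (f := fun j => (y j)^2)
      (fun j _ => sq_nonneg _) (Finset.mem_range.mpr (Nat.succ_pos i))
    simpa [hS] using this
  have hSsucc : ∀ i, S (i+1) = S i + (y (i+1))^2 := by
    intro i; simp [hS, Finset.sum_range_succ]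
  have hSc_of : ∀ s : ℝ, 0 ≤ s → 2*s^2 ≤ c^2 + 2*c^2*c^2 → s ≤ c := by
    intro s hs h2
    have hs2 : s^2 ≤ c^2 := by nlinarith
    nlinarith
  have key : ∀ i, (y i)^2 ≤ c^2 ∧ (y i)^2 + 2*(S i)^2 ≤ c^2 + 2*c^2*c^2 ∧
      1 + 2*S i ≤ h i ∧ h i < 1 + 5*S i := by
    intro i
    induction i with
    | zero =>
      have hS0 : S 0 = c^2 := by simp [hS, hc]
      have h1 : (0:ℝ) < 1 - c^2 := by nlinarith
      refine ⟨le_refl _, le_of_eq (by rw [hS0, ← hc]; ring), ?_, ?_⟩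
      · rw [hh0, hS0]
        have : 2*c^2 ≤ 2*c^2/(1-c^2) := by
          rw [le_div_iff₀ h1]; nlinarith
        linarith [this]
      · rw [hh0, hS0]
        have : 2*c^2/(1-c^2) < 5*c^2 := by
          rw [div_lt_iff₀ h1]; nlinarith [mul_pos hc0 hc0]
        linarith [this]
    | succ i ih =>
      obtain ⟨h1i, h2i, h3i, h4i⟩ := ih
      have hSpos : 0 < S i := lt_of_lt_of_le (by positivity) (hSlb i)
      have hSc : S i ≤ c := hSc_of (S i) (hSnn i) (by nlinarith [sq_nonneg (y i)])
      have hS10 : S i ≤ 1/10 := by linarith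
      have hhgt1 : 1 < h i := by nlinarith
      have hhpos : 0 < h i := by linarith
      have hhlt2 : h i < 3/2 := by nlinarith
      obtain ⟨q, hq⟩ : ∃ q : ℝ, q = 1 - 2 / h i := ⟨_, rfl⟩
      have hyq : (y (i+1))^2 = q^2 * (y i)^2 := by rw [hyrec i, ← hq]; ring
      have hqh : q * h i = h i - 2 := by
        rw [hq]; field_simp
      have hqle0 : q ≤ 0 := by
        have h2h : (1:ℝ) ≤ 2 / h i := by rw [le_div_iff₀ hhpos]; linarith
        rw [hq]; linarith
      have hqgt : -1 < q := by
        have h2h : 2 / h i < 2 := by rw [div_lt_iff₀ hhpos]; nlinarith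
        rw [hq]; linarith
      have ht1 : (2*S i - 1) * h i ≤ (h i - 2) * (1 + 2*S i) := by nlinarith
      have ht2 : 2*S i - 1 ≤ q * (1 + 2*S i) := by
        have h' : (2*S i - 1) * h i ≤ (q * (1 + 2*S i)) * h i := by
          calc (2*S i - 1) * h i ≤ (h i - 2) * (1 + 2*S i) := ht1
          _ = (q * h i) * (1 + 2*S i) := by rw [hqh]
          _ = (q * (1 + 2*S i)) * h i := by ring
        exact le_of_mul_le_mul_right h' hhpos
      have ht3 : q * (1 + 2*S i) ≤ 0 :=
        mul_nonpos_of_nonpos_of_nonneg hqle0 (by linarith)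
      have hb : q^2 * (1 + 2*S i)^2 ≤ (1 - 2*S i)^2 := by
        nlinarith [mul_nonneg (by linarith : (0:ℝ) ≤ q*(1+2*S i) - (2*S i - 1))
          (by linarith : (0:ℝ) ≤ -(q*(1+2*S i))), ht2, ht3]
      have hq2le1 : q^2 ≤ 1 := by nlinarith
      have ha : 0 ≤ (y i)^2 := sq_nonneg _
      have haS : (y i)^2 ≤ S i := le_trans h1i (hSlb i)
      have h1' : (y (i+1))^2 ≤ c^2 := by
        rw [hyq]; nlinarith
      have hq4 : q^2*q^2 ≤ 1 := by nlinarith [sq_nonneg q]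
      have haSa : (y i)^2 * (y i)^2 ≤ S i * (y i)^2 :=
        mul_le_mul_of_nonneg_right haS ha
      have hB : q^2*q^2*((y i)^2*(y i)^2) ≤ S i * (y i)^2 := by
        calc q^2*q^2*((y i)^2*(y i)^2) ≤ 1*((y i)^2*(y i)^2) :=
              mul_le_mul_of_nonneg_right hq4 (by positivity)
        _ = (y i)^2*(y i)^2 := by ring
        _ ≤ S i * (y i)^2 := haSa
      have hA : q^2 * (1 + 2*S i)^2 * (y i)^2 ≤ (1 - 2*S i)^2 * (y i)^2 :=
        mul_le_mul_of_nonneg_right hb ha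
      have h2' : (y (i+1))^2 + 2*(S (i+1))^2 ≤ (y i)^2 + 2*(S i)^2 := by
        rw [hSsucc i, hyq]
        nlinarith [hA, hB, mul_nonneg (mul_nonneg (hSnn i) ha)
            (by linarith : (0:ℝ) ≤ 1 - 2*S i),
          mul_nonneg (mul_nonneg (mul_nonneg (hSnn i) (hSnn i)) (sq_nonneg q)) ha,
          mul_nonneg (hSnn i) ha]
      have hynewnn : 0 ≤ (y (i+1))^2 := sq_nonneg _
      have hden : (0:ℝ) < 1 - (y (i+1))^2 := by nlinarith
      have h3' : 1 + 2*S (i+1) ≤ h (i+1) := by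
        rw [hhrec i, hSsucc i]
        have : 2*(y (i+1))^2 ≤ 4*(y (i+1))^2/(1 - (y (i+1))^2) := by
          rw [le_div_iff₀ hden]; nlinarith
        linarith
      have h4' : h (i+1) < 1 + 5*S (i+1) := by
        rw [hhrec i, hSsucc i]
        have : 4*(y (i+1))^2/(1 - (y (i+1))^2) ≤ 5*(y (i+1))^2 := by
          rw [div_le_iff₀ hden]; nlinarith
        linarith
      exact ⟨h1', by linarith [h2'], h3', h4'⟩
  intro i
  obtain ⟨h1i, h2i, h3i, h4i⟩ := key i
  have hSc : S i ≤ c := hSc_of (S i) (hSnn i) (by nlinarith [sq_nonneg (y i)])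
  exact ⟨h4i, by linarith⟩
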